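/- arXiv:0901.1908 — 4 statements merged into one kernel-verified Lean document; each statement's English description precedes it below -/
import Mathlib

section
/- Let D be a nice probability measure on ℝ², let Δ and Δ* be triangulations of ℝ², and let {Δ₁, …, Δ_m} be a partition of the set of triangles Δ. Suppose that for every i ∈ {1, …, m} and every triangle t* ∈ Δ*, the number of triangles t ∈ Δ_i whose interior intersects the interior of t* is at most c_i (with c_i ≥ 1). Then H(Δ) ≤ H(Δ*) + H({∪Δ₁, …, ∪Δ_m}) + Σ_{i=1}^m D(∪Δ_i)·log₂(c_i), where ∪Δ_i denotes the union of the triangles in Δ_i. -/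
open MeasureTheory

open scoped Classical

/-- A closed halfplane in the plane (possibly degenerate when `(a,b) = (0,0)`). -/
def halfplane (a b c : ℝ) : Set (ℝ × ℝ) := {p | a * p.1 + b * p.2 ≤ c}

/-- A triangle: the intersection of at most 3 closed halfplanes
(taking a degenerate halfplane equal to the whole plane covers "fewer than 3"). -/
def IsTriangle (t : Set (ℝ × ℝ)) : Prop :=
  ∃ a b c : Fin 3 → ℝ, t = ⋂ i, halfplane (a i) (b i) (c i)

/-- A triangulation of the plane: a finite set of triangles with pairwise
disjoint interiors whose union is all of `ℝ²`. -/
structure IsTriangulation (Δ : Finset (Set (ℝ × ℝ))) : Prop where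
  tri : ∀ t ∈ Δ, IsTriangle t
  disj : ∀ t ∈ Δ, ∀ s ∈ Δ, t ≠ s → interior t ∩ interior s = ∅
  cover : ⋃₀ (Δ : Set (Set (ℝ × ℝ))) = Set.univ

/-- The function `x ↦ x·log₂(1/x)`; note that in Lean `0 * logb 2 (1/0) = 0`,
matching the convention `0·log₂(1/0) = 0`. -/
noncomputable def ent (x : ℝ) : ℝ := x * Real.logb 2 (1 / x)

/-- The entropy `H(S) = Σ_{s ∈ S} D(s)·log₂(1/D(s))` of a finite family of sets. -/
noncomputable def Hent (μ : Measure (ℝ × ℝ)) (S : Finset (Set (ℝ × ℝ))) : ℝ :=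
  ∑ s ∈ S, ent (μ s).toReal

/-! ### Real-analytic auxiliary lemmas -/

lemma ent_eq (x : ℝ) : ent x = -(x * Real.logb 2 x) := by
  unfold ent
  rw [one_div, Real.logb_inv]
  ring

lemma concaveOn_logb2 : ConcaveOn ℝ (Set.Ioi 0) (Real.logb 2) := by
  have h := strictConcaveOn_log_Ioi.concaveOn
  have h2 : (Real.logb 2) = fun x => (Real.log 2)⁻¹ • Real.log x := by
    funext x
    simp [Real.logb, div_eq_inv_mul]
  rw [h2]
  exact h.smul (by positivity)

/-- The log-sum / Jensen inequality for `logb 2`. -/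
lemma log_sum_le {ι : Type*} (s : Finset ι) (a b : ι → ℝ) (B : ℝ)
    (ha : ∀ j ∈ s, 0 ≤ a j) (hb : ∀ j ∈ s, a j ≠ 0 → 0 < b j)
    (hB : ∑ j ∈ s with a j ≠ 0, b j ≤ B) :
    ∑ j ∈ s, a j * Real.logb 2 (b j / a j)
      ≤ (∑ j ∈ s, a j) * Real.logb 2 (B / ∑ j ∈ s, a j) := by
  classical
  set s' := s.filter (fun j => a j ≠ 0) with hs'
  have hsub : s' ⊆ s := Finset.filter_subset _ _
  have hmem : ∀ j ∈ s', 0 < a j := by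
    intro j hj
    rcases Finset.mem_filter.mp hj with ⟨hj1, hj2⟩
    exact lt_of_le_of_ne (ha j hj1) (Ne.symm hj2)
  have hsum_eq : ∑ j ∈ s, a j = ∑ j ∈ s', a j := by
    refine (Finset.sum_subset hsub ?_).symm
    intro j hj hnj
    by_contra h
    exact hnj (Finset.mem_filter.mpr ⟨hj, h⟩)
  have hlhs_eq : ∑ j ∈ s, a j * Real.logb 2 (b j / a j)
      = ∑ j ∈ s', a j * Real.logb 2 (b j / a j) := by
    refine (Finset.sum_subset hsub ?_).symm
    intro j hj hnj
    have : a j = 0 := by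
      by_contra h
      exact hnj (Finset.mem_filter.mpr ⟨hj, h⟩)
    simp [this]
  rw [hlhs_eq, hsum_eq]
  rcases Finset.eq_empty_or_nonempty s' with he | hne
  · rw [he]; simp
  · have hApos : 0 < ∑ j ∈ s', a j := Finset.sum_pos hmem hne
    have hbpos : ∀ j ∈ s', 0 < b j := fun j hj =>
      hb j (hsub hj) (Finset.mem_filter.mp hj).2
    set A := ∑ j ∈ s', a j with hAdef
    -- Jensen
    have hjensen := concaveOn_logb2.le_map_sum (t := s') (w := fun j => a j / A)
      (p := fun j => b j / a j)
      (fun j hj => div_nonneg (hmem j hj).le hApos.le)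
      (by rw [← Finset.sum_div]; field_simp; exact hAdef.symm)
      (fun j hj => Set.mem_Ioi.mpr (div_pos (hbpos j hj) (hmem j hj)))
    have heq1 : ∑ j ∈ s', (fun j => a j / A) j • (fun j => b j / a j) j
        = (∑ j ∈ s', b j) / A := by
      simp only [smul_eq_mul]
      rw [Finset.sum_div]
      refine Finset.sum_congr rfl (fun j hj => ?_)
      have h := (hmem j hj).ne'
      field_simp
    have heq2 : ∑ j ∈ s', (fun j => a j / A) j • Real.logb 2 ((fun j => b j / a j) j)
        = (∑ j ∈ s', a j * Real.logb 2 (b j / a j)) / A := by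
      simp only [smul_eq_mul]
      rw [Finset.sum_div]
      refine Finset.sum_congr rfl (fun j hj => ?_)
      ring
    rw [heq1, heq2] at hjensen
    have hbsumpos : 0 < ∑ j ∈ s', b j := Finset.sum_pos hbpos hne
    have hBle : Real.logb 2 ((∑ j ∈ s', b j) / A) ≤ Real.logb 2 (B / A) := by
      apply Real.logb_le_logb_of_le one_lt_two (div_pos hbsumpos hApos)
      gcongr
    have hfin := hjensen.trans hBle
    calc ∑ j ∈ s', a j * Real.logb 2 (b j / a j)
        = ((∑ j ∈ s', a j * Real.logb 2 (b j / a j)) / A) * A := by field_simp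
      _ ≤ Real.logb 2 (B / A) * A := mul_le_mul_of_nonneg_right hfin hApos.le
      _ = A * Real.logb 2 (B / A) := by ring

/-- The abstract (purely real-valued) entropy inequality. -/
lemma core {α β : Type*} [DecidableEq α] (S : Finset β) (m : ℕ)
    (part : Fin m → Finset α)
    (hdisj : ∀ i j, i ≠ j → Disjoint (part i) (part j))
    (T : Finset α) (hT : T = Finset.univ.biUnion part)
    (q : α → β → ℝ) (hq : ∀ t t', 0 ≤ q t t')
    (hsum1 : ∑ t' ∈ S, ∑ t ∈ T, q t t' ≤ 1)
    (c : Fin m → ℝ) (hc : ∀ i, 1 ≤ c i)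
    (hcount : ∀ i, ∀ t' ∈ S, (((part i).filter (fun t => q t t' ≠ 0)).card : ℝ) ≤ c i) :
    ∑ t ∈ T, ent (∑ t' ∈ S, q t t')
      ≤ ∑ t' ∈ S, ent (∑ t ∈ T, q t t')
        + ∑ i, ent (∑ t ∈ part i, ∑ t' ∈ S, q t t')
        + ∑ i, (∑ t ∈ part i, ∑ t' ∈ S, q t t') * Real.logb 2 (c i) := by
  classical
  have hpartsub : ∀ i, part i ⊆ T := by
    intro i
    rw [hT]
    intro t ht
    exact Finset.mem_biUnion.mpr ⟨i, Finset.mem_univ _, ht⟩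
  have hqleb : ∀ t ∈ T, ∀ t', q t t' ≤ ∑ s ∈ T, q s t' := by
    intro t ht t'
    exact Finset.single_le_sum (fun s _ => hq s t') ht
  -- Step A
  have stepA : ∑ t ∈ T, ent (∑ t' ∈ S, q t t')
      ≤ ∑ t ∈ T, ∑ t' ∈ S, -(q t t' * Real.logb 2 (q t t')) := by
    refine Finset.sum_le_sum (fun t _ => ?_)
    rw [ent_eq]
    have hrw : -((∑ t' ∈ S, q t t') * Real.logb 2 (∑ t' ∈ S, q t t'))
        = ∑ t' ∈ S, -(q t t' * Real.logb 2 (∑ s ∈ S, q t s)) := by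
      rw [Finset.sum_neg_distrib, ← Finset.sum_mul]
    rw [hrw]
    refine Finset.sum_le_sum (fun t' ht' => ?_)
    rcases eq_or_ne (q t t') 0 with h0 | h0
    · simp [h0]
    · have hpos : 0 < q t t' := lt_of_le_of_ne (hq t t') (Ne.symm h0)
      have hle : q t t' ≤ ∑ s ∈ S, q t s :=
        Finset.single_le_sum (fun s _ => hq t s) ht'
      have hlog : Real.logb 2 (q t t') ≤ Real.logb 2 (∑ s ∈ S, q t s) :=
        Real.logb_le_logb_of_le one_lt_two hpos hle
      nlinarith
  -- chain rule at each t'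
  have chain : ∀ t' ∈ S, ∑ t ∈ T, -(q t t' * Real.logb 2 (q t t'))
      = (∑ t ∈ T, q t t' * Real.logb 2 ((∑ s ∈ T, q s t') / q t t'))
        + ent (∑ s ∈ T, q s t') := by
    intro t' _
    rw [ent_eq]
    have hptw : ∀ t ∈ T, -(q t t' * Real.logb 2 (q t t'))
        = q t t' * Real.logb 2 ((∑ s ∈ T, q s t') / q t t')
          + -(q t t' * Real.logb 2 (∑ s ∈ T, q s t')) := by
      intro t ht
      rcases eq_or_ne (q t t') 0 with h0 | h0
      · simp [h0]
      · have hq0 : 0 < q t t' := lt_of_le_of_ne (hq t t') (Ne.symm h0)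
        have hb0 : 0 < ∑ s ∈ T, q s t' := lt_of_lt_of_le hq0 (hqleb t ht t')
        rw [Real.logb_div hb0.ne' h0]
        ring
    rw [Finset.sum_congr rfl hptw, Finset.sum_add_distrib]
    congr 1
    rw [Finset.sum_neg_distrib, ← Finset.sum_mul]
  -- split inner sum over parts
  have hsplit : ∀ (f : α → ℝ), ∑ t ∈ T, f t = ∑ i, ∑ t ∈ part i, f t := by
    intro f
    rw [hT]
    exact Finset.sum_biUnion (fun i _ j _ hij => hdisj i j hij)
  -- per i, t' bound
  have h4 : ∀ i, ∀ t' ∈ S,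
      ∑ t ∈ part i, q t t' * Real.logb 2 ((∑ s ∈ T, q s t') / q t t')
        ≤ (∑ t ∈ part i, q t t') * Real.logb 2 (c i)
          + (∑ t ∈ part i, q t t')
            * Real.logb 2 ((∑ s ∈ T, q s t') / (∑ t ∈ part i, q t t')) := by
    intro i t' ht'
    set Q := ∑ t ∈ part i, q t t' with hQdef
    have hQnn : 0 ≤ Q := Finset.sum_nonneg (fun t _ => hq t t')
    have hQleb : Q ≤ ∑ s ∈ T, q s t' :=
      Finset.sum_le_sum_of_subset_of_nonneg (hpartsub i) (fun t _ _ => hq t t')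
    have hptw : ∀ t ∈ part i, q t t' * Real.logb 2 ((∑ s ∈ T, q s t') / q t t')
        = q t t' * Real.logb 2 (Q / q t t')
          + q t t' * Real.logb 2 ((∑ s ∈ T, q s t') / Q) := by
      intro t ht
      rcases eq_or_ne (q t t') 0 with h0 | h0
      · simp [h0]
      · have hq0 : 0 < q t t' := lt_of_le_of_ne (hq t t') (Ne.symm h0)
        have hQ0 : 0 < Q := lt_of_lt_of_le hq0
          (Finset.single_le_sum (fun s _ => hq s t') ht)
        have hb0 : 0 < ∑ s ∈ T, q s t' := lt_of_lt_of_le hQ0 hQleb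
        rw [Real.logb_div hb0.ne' h0, Real.logb_div hQ0.ne' h0,
          Real.logb_div hb0.ne' hQ0.ne']
        ring
    rw [Finset.sum_congr rfl hptw, Finset.sum_add_distrib]
    have hsecond : ∑ t ∈ part i, q t t' * Real.logb 2 ((∑ s ∈ T, q s t') / Q)
        = Q * Real.logb 2 ((∑ s ∈ T, q s t') / Q) := by
      rw [← Finset.sum_mul]
    rw [hsecond]
    gcongr ?_ + _
    -- entropy ≤ log of support size
    rcases eq_or_lt_of_le hQnn with hQ0 | hQ0
    · have hz : ∀ t ∈ part i, q t t' = 0 := by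
        intro t ht
        have := Finset.sum_eq_zero_iff_of_nonneg (fun t _ => hq t t') |>.mp hQ0.symm
        exact this t ht
      have : ∑ t ∈ part i, q t t' * Real.logb 2 (Q / q t t') = 0 :=
        Finset.sum_eq_zero (fun t ht => by rw [hz t ht]; ring)
      rw [this, ← hQ0]
      simp
    · -- Q > 0
      set n := ((part i).filter (fun t => q t t' ≠ 0)).card with hn
      have hkey := log_sum_le (part i) (fun t => q t t') (fun _ => Q) ((n : ℝ) * Q)
        (fun t _ => hq t t') (fun t _ _ => hQ0)
        (by rw [Finset.sum_const, nsmul_eq_mul])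
      rw [← hQdef] at hkey
      have hratio : ((n : ℝ) * Q) / Q = (n : ℝ) := by
        field_simp
      rw [hratio] at hkey
      have hn1 : 1 ≤ (n : ℝ) := by
        have hne : ((part i).filter (fun t => q t t' ≠ 0)).Nonempty := by
          by_contra h
          rw [Finset.not_nonempty_iff_eq_empty, Finset.filter_eq_empty_iff] at h
          have : Q = 0 := Finset.sum_eq_zero (fun t ht => by
            have := h ht; simpa using this)
          exact hQ0.ne' this
        have := Finset.card_pos.mpr hne
        exact_mod_cast this
      have hlog : Real.logb 2 (n : ℝ) ≤ Real.logb 2 (c i) :=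
        Real.logb_le_logb_of_le one_lt_two (by linarith) (hcount i t' ht')
      calc ∑ t ∈ part i, q t t' * Real.logb 2 (Q / q t t')
          ≤ Q * Real.logb 2 (n : ℝ) := hkey
        _ ≤ Q * Real.logb 2 (c i) := mul_le_mul_of_nonneg_left hlog hQnn
  -- per i bound across t'
  have h5 : ∀ i, ∑ t' ∈ S, (∑ t ∈ part i, q t t')
        * Real.logb 2 ((∑ s ∈ T, q s t') / (∑ t ∈ part i, q t t'))
      ≤ ent (∑ t ∈ part i, ∑ t' ∈ S, q t t') := by
    intro i
    have hPQ : ∑ t ∈ part i, ∑ t' ∈ S, q t t' = ∑ t' ∈ S, ∑ t ∈ part i, q t t' :=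
      Finset.sum_comm
    have hkey := log_sum_le S (fun t' => ∑ t ∈ part i, q t t')
      (fun t' => ∑ s ∈ T, q s t') 1
      (fun t' _ => Finset.sum_nonneg (fun t _ => hq t t'))
      (fun t' _ hne => by
        have hQnn : 0 ≤ ∑ t ∈ part i, q t t' :=
          Finset.sum_nonneg (fun t _ => hq t t')
        have hQpos : 0 < ∑ t ∈ part i, q t t' := lt_of_le_of_ne hQnn (Ne.symm hne)
        exact lt_of_lt_of_le hQpos
          (Finset.sum_le_sum_of_subset_of_nonneg (hpartsub i) (fun t _ _ => hq t t')))
      (by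
        refine le_trans ?_ hsum1
        exact Finset.sum_le_sum_of_subset_of_nonneg (Finset.filter_subset _ _)
          (fun t' _ _ => Finset.sum_nonneg (fun t _ => hq t t')))
    rw [hPQ]
    unfold ent
    convert hkey using 3
  -- h6
  have h6 : ∀ i, ∑ t' ∈ S, (∑ t ∈ part i, q t t') * Real.logb 2 (c i)
      = (∑ t ∈ part i, ∑ t' ∈ S, q t t') * Real.logb 2 (c i) := by
    intro i
    rw [← Finset.sum_mul]
    congr 1
    exact Finset.sum_comm.symm
  -- assemble
  calc ∑ t ∈ T, ent (∑ t' ∈ S, q t t')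
      ≤ ∑ t ∈ T, ∑ t' ∈ S, -(q t t' * Real.logb 2 (q t t')) := stepA
    _ = ∑ t' ∈ S, ∑ t ∈ T, -(q t t' * Real.logb 2 (q t t')) := Finset.sum_comm
    _ = ∑ t' ∈ S, ((∑ t ∈ T, q t t' * Real.logb 2 ((∑ s ∈ T, q s t') / q t t'))
          + ent (∑ s ∈ T, q s t')) := Finset.sum_congr rfl chain
    _ = (∑ t' ∈ S, ∑ t ∈ T, q t t' * Real.logb 2 ((∑ s ∈ T, q s t') / q t t'))
          + ∑ t' ∈ S, ent (∑ s ∈ T, q s t') := Finset.sum_add_distrib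
    _ = (∑ t' ∈ S, ∑ i, ∑ t ∈ part i,
            q t t' * Real.logb 2 ((∑ s ∈ T, q s t') / q t t'))
          + ∑ t' ∈ S, ent (∑ s ∈ T, q s t') := by
        congr 1
        exact Finset.sum_congr rfl (fun t' _ => hsplit _)
    _ ≤ (∑ t' ∈ S, ∑ i, ((∑ t ∈ part i, q t t') * Real.logb 2 (c i)
            + (∑ t ∈ part i, q t t')
              * Real.logb 2 ((∑ s ∈ T, q s t') / (∑ t ∈ part i, q t t'))))
          + ∑ t' ∈ S, ent (∑ s ∈ T, q s t') := by
        gcongr with t' ht' i _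
        exact h4 i t' ht'
    _ = (∑ i, ∑ t' ∈ S, (∑ t ∈ part i, q t t') * Real.logb 2 (c i))
          + (∑ i, ∑ t' ∈ S, (∑ t ∈ part i, q t t')
              * Real.logb 2 ((∑ s ∈ T, q s t') / (∑ t ∈ part i, q t t')))
          + ∑ t' ∈ S, ent (∑ s ∈ T, q s t') := by
        congr 1
        conv_lhs => rw [Finset.sum_comm]
        simp [Finset.sum_add_distrib]
    _ ≤ (∑ i, (∑ t ∈ part i, ∑ t' ∈ S, q t t') * Real.logb 2 (c i))
          + (∑ i, ent (∑ t ∈ part i, ∑ t' ∈ S, q t t'))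
          + ∑ t' ∈ S, ent (∑ s ∈ T, q s t') := by
        gcongr ?_ + ?_ + _
        · exact le_of_eq (Finset.sum_congr rfl (fun i _ => h6 i))
        · exact Finset.sum_le_sum (fun i _ => h5 i)
    _ = ∑ t' ∈ S, ent (∑ t ∈ T, q t t')
          + ∑ i, ent (∑ t ∈ part i, ∑ t' ∈ S, q t t')
          + ∑ i, (∑ t ∈ part i, ∑ t' ∈ S, q t t') * Real.logb 2 (c i) := by ring

/-! ### Measure-theoretic auxiliary lemmas -/

lemma halfplane_convex (a b c : ℝ) : Convex ℝ (halfplane a b c) := by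
  have hlin : IsLinearMap ℝ (fun p : ℝ × ℝ => a * p.1 + b * p.2) := by
    constructor
    · intro p q; simp; ring
    · intro r p; simp [smul_eq_mul]; ring
  exact convex_halfSpace_le hlin c

lemma halfplane_closed (a b c : ℝ) : IsClosed (halfplane a b c) := by
  have : Continuous (fun p : ℝ × ℝ => a * p.1 + b * p.2) := by continuity
  exact isClosed_le this continuous_const

lemma IsTriangle.convex {t : Set (ℝ × ℝ)} (h : IsTriangle t) : Convex ℝ t := by
  obtain ⟨a, b, c, rfl⟩ := h
  exact convex_iInter (fun i => halfplane_convex _ _ _)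

lemma IsTriangle.closed {t : Set (ℝ × ℝ)} (h : IsTriangle t) : IsClosed t := by
  obtain ⟨a, b, c, rfl⟩ := h
  exact isClosed_iInter (fun i => halfplane_closed _ _ _)

lemma IsTriangle.measurableSet {t : Set (ℝ × ℝ)} (h : IsTriangle t) : MeasurableSet t :=
  h.closed.measurableSet

lemma IsTriangle.frontier_null {t : Set (ℝ × ℝ)} (h : IsTriangle t)
    (μ : Measure (ℝ × ℝ)) (hnice : μ ≪ volume) : μ (frontier t) = 0 :=
  hnice (Convex.addHaar_frontier volume h.convex)

/-- If the interiors of two triangles are disjoint then their intersection is null. -/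
lemma inter_null {t s : Set (ℝ × ℝ)} (ht : IsTriangle t) (hs : IsTriangle s)
    (hdisj : interior t ∩ interior s = ∅)
    (μ : Measure (ℝ × ℝ)) (hnice : μ ≪ volume) : μ (t ∩ s) = 0 := by
  have hsub : t ∩ s ⊆ frontier t ∪ frontier s := by
    intro x ⟨hxt, hxs⟩
    by_cases h1 : x ∈ interior t
    · by_cases h2 : x ∈ interior s
      · exact absurd (Set.mem_inter h1 h2) (by rw [hdisj]; exact Set.notMem_empty x)
      · right
        rw [frontier, hs.closed.closure_eq]
        exact ⟨hxs, h2⟩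
    · left
      rw [frontier, ht.closed.closure_eq]
      exact ⟨hxt, h1⟩
  refine measure_mono_null hsub ?_
  exact measure_union_null (ht.frontier_null μ hnice) (hs.frontier_null μ hnice)

/-- Splitting the measure of `A ∩ ⋃₀ S` into a sum over an almost-disjoint family. -/
lemma meas_inter_sUnion (μ : Measure (ℝ × ℝ)) (S : Finset (Set (ℝ × ℝ)))
    (hm : ∀ t ∈ S, MeasurableSet t)
    (hnull : ∀ t ∈ S, ∀ s ∈ S, t ≠ s → μ (t ∩ s) = 0)
    (A : Set (ℝ × ℝ)) (hA : MeasurableSet A) :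
    μ (A ∩ ⋃₀ (S : Set (Set (ℝ × ℝ)))) = ∑ t ∈ S, μ (A ∩ t) := by
  classical
  induction S using Finset.induction_on with
  | empty => simp
  | @insert t S' htS' ih =>
    have hm' : ∀ s ∈ S', MeasurableSet s := fun s hs => hm s (Finset.mem_insert_of_mem hs)
    have hnull' : ∀ a ∈ S', ∀ b ∈ S', a ≠ b → μ (a ∩ b) = 0 := fun a ha b hb hab =>
      hnull a (Finset.mem_insert_of_mem ha) b (Finset.mem_insert_of_mem hb) hab
    have hU : MeasurableSet (⋃₀ (S' : Set (Set (ℝ × ℝ)))) := by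
      rw [Set.sUnion_eq_biUnion]
      exact MeasurableSet.biUnion S'.countable_toSet (fun s hs => hm' s hs)
    have hcoe : ⋃₀ ((insert t S' : Finset (Set (ℝ × ℝ))) : Set (Set (ℝ × ℝ)))
        = t ∪ ⋃₀ (S' : Set (Set (ℝ × ℝ))) := by
      rw [Finset.coe_insert, Set.sUnion_insert]
    rw [hcoe, Set.inter_union_distrib_left]
    have hkey := measure_union_add_inter (μ := μ) (A ∩ t) (hA.inter hU)
    have hz : μ ((A ∩ t) ∩ (A ∩ ⋃₀ (S' : Set (Set (ℝ × ℝ))))) = 0 := by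
      refine measure_mono_null (t := ⋃ s ∈ S', t ∩ s) ?_ ?_
      · intro x hx
        obtain ⟨⟨hxA, hxt⟩, ⟨_, u, huS, hxu⟩⟩ := hx
        exact Set.mem_biUnion huS ⟨hxt, hxu⟩
      · refine (measure_biUnion_null_iff S'.countable_toSet).mpr (fun s hs => ?_)
        have hts : t ≠ s := fun h => htS' (h ▸ hs)
        exact hnull t (Finset.mem_insert_self t S') s (Finset.mem_insert_of_mem hs) hts
    rw [hz, add_zero] at hkey
    rw [hkey, ih hm' hnull', Finset.sum_insert htS']


theorem entropy_lower_bound_partitioned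
    (μ : Measure (ℝ × ℝ)) [IsProbabilityMeasure μ]
    (hnice : μ ≪ volume)
    (Δ Δstar : Finset (Set (ℝ × ℝ)))
    (hΔ : IsTriangulation Δ) (hΔstar : IsTriangulation Δstar)
    (m : ℕ) (part : Fin m → Finset (Set (ℝ × ℝ)))
    (hdisj : ∀ i j : Fin m, i ≠ j → Disjoint (part i) (part j))
    (hcover : (Δ : Set (Set (ℝ × ℝ))) = ⋃ i, (part i : Set (Set (ℝ × ℝ))))
    (c : Fin m → ℝ) (hc : ∀ i, 1 ≤ c i)
    (hcount : ∀ i : Fin m, ∀ tstar ∈ Δstar,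
      (({t | t ∈ part i ∧ (interior t ∩ interior tstar).Nonempty} :
          Set (Set (ℝ × ℝ))).ncard : ℝ) ≤ c i) :
    Hent μ Δ ≤ Hent μ Δstar
      + (∑ i : Fin m, ent (μ (⋃₀ (part i : Set (Set (ℝ × ℝ))))).toReal)
      + ∑ i : Fin m, (μ (⋃₀ (part i : Set (Set (ℝ × ℝ))))).toReal * Real.logb 2 (c i) := by
  classical
  set q : Set (ℝ × ℝ) → Set (ℝ × ℝ) → ℝ := fun t t' => (μ (t ∩ t')).toReal with hqdef
  have hΔnull : ∀ t ∈ Δ, ∀ s ∈ Δ, t ≠ s → μ (t ∩ s) = 0 := fun t ht s hs hts =>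
    inter_null (hΔ.tri t ht) (hΔ.tri s hs) (hΔ.disj t ht s hs hts) μ hnice
  have hSnull : ∀ t ∈ Δstar, ∀ s ∈ Δstar, t ≠ s → μ (t ∩ s) = 0 := fun t ht s hs hts =>
    inter_null (hΔstar.tri t ht) (hΔstar.tri s hs) (hΔstar.disj t ht s hs hts) μ hnice
  have hΔm : ∀ t ∈ Δ, MeasurableSet t := fun t ht => (hΔ.tri t ht).measurableSet
  have hSm : ∀ t ∈ Δstar, MeasurableSet t := fun t ht => (hΔstar.tri t ht).measurableSet
  -- `part i ⊆ Δ`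
  have hpartΔ : ∀ i, part i ⊆ Δ := by
    intro i t ht
    have : t ∈ ⋃ j, (part j : Set (Set (ℝ × ℝ))) := Set.mem_iUnion.mpr ⟨i, ht⟩
    rw [← hcover] at this
    exact this
  -- `Δ` as a biUnion Finset
  have hT : Δ = Finset.univ.biUnion part := by
    refine Finset.ext (fun t => ?_)
    constructor
    · intro ht
      have : t ∈ ⋃ i, (part i : Set (Set (ℝ × ℝ))) := by
        rw [← hcover]; exact ht
      obtain ⟨i, hi⟩ := Set.mem_iUnion.mp this
      exact Finset.mem_biUnion.mpr ⟨i, Finset.mem_univ _, hi⟩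
    · intro ht
      obtain ⟨i, _, hi⟩ := Finset.mem_biUnion.mp ht
      exact hpartΔ i hi
  -- marginals
  have ha_eq : ∀ t, MeasurableSet t → (μ t).toReal = ∑ t' ∈ Δstar, q t t' := by
    intro t hmt
    have h := meas_inter_sUnion μ Δstar hSm hSnull t hmt
    rw [hΔstar.cover, Set.inter_univ] at h
    rw [h, ENNReal.toReal_sum (fun a _ => measure_ne_top μ _)]
  have hb_eq : ∀ t', MeasurableSet t' → (μ t').toReal = ∑ t ∈ Δ, q t t' := by
    intro t' hmt'
    have h := meas_inter_sUnion μ Δ hΔm hΔnull t' hmt'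
    rw [hΔ.cover, Set.inter_univ] at h
    rw [h, ENNReal.toReal_sum (fun a _ => measure_ne_top μ _)]
    exact Finset.sum_congr rfl (fun t _ => by rw [hqdef]; simp [Set.inter_comm])
  -- total mass
  have hsum1 : ∑ t' ∈ Δstar, ∑ t ∈ Δ, q t t' ≤ 1 := by
    have h := meas_inter_sUnion μ Δstar hSm hSnull Set.univ MeasurableSet.univ
    rw [hΔstar.cover, Set.inter_univ] at h
    have h2 : ∑ t' ∈ Δstar, (μ t').toReal = 1 := by
      have : (μ Set.univ).toReal = 1 := by simp
      rw [← this, h, ENNReal.toReal_sum (fun a _ => measure_ne_top μ _)]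
      exact Finset.sum_congr rfl (fun t' _ => by rw [Set.univ_inter])
    rw [← h2]
    refine le_of_eq (Finset.sum_congr rfl (fun t' ht' => ?_))
    exact (hb_eq t' (hSm t' ht')).symm
  -- partition masses
  have hP : ∀ i, (μ (⋃₀ (part i : Set (Set (ℝ × ℝ))))).toReal
      = ∑ t ∈ part i, ∑ t' ∈ Δstar, q t t' := by
    intro i
    have h := meas_inter_sUnion μ (part i) (fun t ht => hΔm t (hpartΔ i ht))
      (fun t ht s hs hts => hΔnull t (hpartΔ i ht) s (hpartΔ i hs) hts)
      Set.univ MeasurableSet.univ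
    rw [Set.univ_inter] at h
    rw [h, ENNReal.toReal_sum (fun a _ => measure_ne_top μ _)]
    refine Finset.sum_congr rfl (fun t ht => ?_)
    rw [Set.univ_inter]
    exact ha_eq t (hΔm t (hpartΔ i ht))
  -- counting hypothesis
  have hcount' : ∀ i, ∀ t' ∈ Δstar,
      (((part i).filter (fun t => q t t' ≠ 0)).card : ℝ) ≤ c i := by
    intro i t' ht'
    have hsubf : (part i).filter (fun t => q t t' ≠ 0)
        ⊆ (part i).filter (fun t => (interior t ∩ interior t').Nonempty) := by
      intro t ht
      obtain ⟨htp, hne⟩ := Finset.mem_filter.mp ht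
      refine Finset.mem_filter.mpr ⟨htp, ?_⟩
      by_contra h
      rw [Set.not_nonempty_iff_eq_empty] at h
      have h0 := inter_null (hΔ.tri t (hpartΔ i htp)) (hΔstar.tri t' ht') h μ hnice
      exact hne (by rw [hqdef]; simp [h0])
    have hsetq : ({t | t ∈ part i ∧ (interior t ∩ interior t').Nonempty} :
        Set (Set (ℝ × ℝ)))
        = ↑((part i).filter (fun t => (interior t ∩ interior t').Nonempty)) := by
      ext t; simp
    have hcard := Finset.card_le_card hsubf
    have := hcount i t' ht'
    rw [hsetq, Set.ncard_coe_finset] at this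
    calc (((part i).filter (fun t => q t t' ≠ 0)).card : ℝ)
        ≤ (((part i).filter (fun t => (interior t ∩ interior t').Nonempty)).card : ℝ) := by
          exact_mod_cast hcard
      _ ≤ c i := this
  -- apply the abstract inequality
  have hmain := core Δstar m part hdisj Δ hT q (fun t t' => ENNReal.toReal_nonneg)
    hsum1 c hc hcount'
  have hHΔ : Hent μ Δ = ∑ t ∈ Δ, ent (∑ t' ∈ Δstar, q t t') := by
    unfold Hent
    exact Finset.sum_congr rfl (fun t ht => by rw [ha_eq t (hΔm t ht)])
  have hHS : Hent μ Δstar = ∑ t' ∈ Δstar, ent (∑ t ∈ Δ, q t t') := by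
    unfold Hent
    exact Finset.sum_congr rfl (fun t' ht' => by rw [hb_eq t' (hSm t' ht')])
  rw [hHΔ, hHS]
  calc ∑ t ∈ Δ, ent (∑ t' ∈ Δstar, q t t')
      ≤ ∑ t' ∈ Δstar, ent (∑ t ∈ Δ, q t t')
        + ∑ i, ent (∑ t ∈ part i, ∑ t' ∈ Δstar, q t t')
        + ∑ i, (∑ t ∈ part i, ∑ t' ∈ Δstar, q t t') * Real.logb 2 (c i) := hmain
    _ = ∑ t' ∈ Δstar, ent (∑ t ∈ Δ, q t t')
        + (∑ i : Fin m, ent (μ (⋃₀ (part i : Set (Set (ℝ × ℝ))))).toReal)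
        + ∑ i : Fin m, (μ (⋃₀ (part i : Set (Set (ℝ × ℝ))))).toReal * Real.logb 2 (c i) := by
        congr 1
        · congr 1
          exact Finset.sum_congr rfl (fun i _ => by rw [hP i])
        · exact Finset.sum_congr rfl (fun i _ => by rw [hP i])
end

section
/- There exists a universal constant C > 0 such that for every probability distribution p = (p_t)_{t∈T} on a countable set T with finite Shannon entropy H, the entropy of the dyadic-level coarsening satisfies Σ_{i≥1} q_i·log₂(1/q_i) ≤ C·(H^{2/3} + 1), with the convention 0·log₂(1/0) = 0. -/
/-- The total mass of the `i`-th dyadic level set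
`G_i = {t : 2^{-i} < p_t ≤ 2^{-(i-1)}}` (for `i ≥ 1`). -/
noncomputable def dyadicMass {T : Type} (p : T → ℝ) (i : ℕ) : ℝ :=
  ∑' t : {t : T // (2 : ℝ) ^ (-(i : ℤ)) < p t ∧ p t ≤ (2 : ℝ) ^ (-(i : ℤ) + 1)}, p t

lemma ent_nonneg {x : ℝ} (h0 : 0 ≤ x) (h1 : x ≤ 1) : 0 ≤ ent x := by
  rcases eq_or_lt_of_le h0 with h | h
  · simp [ent, ← h]
  · exact mul_nonneg h.le (Real.logb_nonneg one_lt_two (one_le_one_div h h1))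

lemma ent_le_gibbs {q r : ℝ} (hq : 0 ≤ q) (hr : 0 < r) :
    ent q ≤ q * Real.logb 2 (1 / r) + r / Real.log 2 := by
  have h2 : (0:ℝ) < Real.log 2 := Real.log_pos one_lt_two
  rcases eq_or_lt_of_le hq with h | h
  · simp only [ent, ← h, zero_mul, zero_add]
    positivity
  · have hlog : Real.log (r / q) ≤ r / q - 1 := Real.log_le_sub_one_of_pos (by positivity)
    have key : ent q = q * Real.logb 2 (1/r) + q * Real.log (r/q) / Real.log 2 := by
      rw [ent, Real.logb, Real.logb, Real.log_div hr.ne' h.ne', one_div, one_div,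
        Real.log_inv, Real.log_inv]
      ring
    rw [key]
    have h3 : q * Real.log (r/q) ≤ r := by
      calc q * Real.log (r/q) ≤ q * (r/q - 1) := mul_le_mul_of_nonneg_left hlog hq
        _ = r - q := by field_simp
        _ ≤ r := by linarith
    exact add_le_add le_rfl ((div_le_div_iff_of_pos_right h2).mpr h3)

set_option maxHeartbeats 2000000 in
/-- The entropy of the dyadic-level coarsening of a countable distribution is
`O(H^{2/3} + 1)` where `H` is the Shannon entropy of the distribution. -/
theorem dyadic_coarsening_entropy :
    ∃ C : ℝ, 0 < C ∧
      ∀ (T : Type) [Countable T] (p : T → ℝ),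
        (∀ t, 0 ≤ p t) → HasSum p 1 →
        Summable (fun t => ent (p t)) →
        (∑' i : ℕ, ent (dyadicMass p (i + 1))) ≤
          C * ((∑' t, ent (p t)) ^ (2 / 3 : ℝ) + 1) := by
  refine ⟨100, by norm_num, ?_⟩
  intro T _ p hp0 hps hse
  set H : ℝ := ∑' t, ent (p t) with hHdef
  have hp1 : ∀ t, p t ≤ 1 := fun t => le_hasSum hps t (fun j _ => hp0 j)
  have hent0 : ∀ t, 0 ≤ ent (p t) := fun t => ent_nonneg (hp0 t) (hp1 t)
  have hH0 : 0 ≤ H := tsum_nonneg hent0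
  have hpsum : Summable p := hps.summable
  -- the dyadic level sets
  set A : ℕ → Set T := fun i =>
    {t | (2 : ℝ) ^ (-((i+1 : ℕ) : ℤ)) < p t ∧ p t ≤ (2 : ℝ) ^ (-((i+1 : ℕ) : ℤ) + 1)} with hAdef
  set q : ℕ → ℝ := fun i => dyadicMass p (i + 1) with hqdef
  have hq_eq : ∀ i : ℕ, q i = ∑' t, (A i).indicator p t := by
    intro i
    rw [hqdef, hAdef]
    exact tsum_subtype _ _
  -- disjointness
  have hdisj : ∀ {i j : ℕ}, i < j → ∀ t, t ∈ A i → t ∉ A j := by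
    intro i j hij t hti htj
    have h1 : (2:ℝ) ^ (-((i+1 : ℕ) : ℤ)) < p t := hti.1
    have h2 : p t ≤ (2:ℝ) ^ (-((j+1 : ℕ) : ℤ) + 1) := htj.2
    have hle : (-((j+1 : ℕ) : ℤ) + 1) ≤ (-((i+1 : ℕ) : ℤ)) := by push_cast; omega
    have := zpow_le_zpow_right₀ (one_le_two (α := ℝ)) hle
    linarith
  -- pointwise: the sum of indicators over disjoint sets is at most g
  have hind_le : ∀ (g : T → ℝ), (∀ t, 0 ≤ g t) → ∀ (n : ℕ) (t : T),
      ∑ i ∈ Finset.range n, (A i).indicator g t ≤ g t := by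
    intro g hg n t
    by_cases h : ∃ i ∈ Finset.range n, t ∈ A i
    · obtain ⟨i₀, hi₀m, hi₀⟩ := h
      have hsum : ∑ i ∈ Finset.range n, (A i).indicator g t = (A i₀).indicator g t := by
        refine Finset.sum_eq_single_of_mem i₀ hi₀m ?_
        intro j _ hne
        apply Set.indicator_of_notMem
        rcases lt_or_gt_of_ne hne with h' | h'
        · exact fun hj => (hdisj h' t hj) hi₀
        · exact hdisj h' t hi₀
      rw [hsum, Set.indicator_of_mem hi₀]
    · push_neg at h
      rw [Finset.sum_eq_zero (fun i hi => Set.indicator_of_notMem (h i hi) g)]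
      exact hg t
  have hfin : ∀ (g : T → ℝ), (∀ t, 0 ≤ g t) → Summable g → ∀ n : ℕ,
      ∑ i ∈ Finset.range n, ∑' t, (A i).indicator g t ≤ ∑' t, g t := by
    intro g hg hgs n
    rw [← Summable.tsum_finsetSum (fun i _ => hgs.indicator (A i))]
    exact Summable.tsum_le_tsum (hind_le g hg n)
      (summable_sum (fun i _ => hgs.indicator (A i))) hgs
  -- basic facts about q
  have hq0 : ∀ i, 0 ≤ q i := by
    intro i
    rw [hq_eq]
    exact tsum_nonneg fun t => Set.indicator_nonneg (fun t _ => hp0 t) t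
  have hQn : ∀ n, ∑ i ∈ Finset.range n, q i ≤ 1 := by
    intro n
    calc ∑ i ∈ Finset.range n, q i
        = ∑ i ∈ Finset.range n, ∑' t, (A i).indicator p t :=
          Finset.sum_congr rfl fun i _ => hq_eq i
      _ ≤ ∑' t, p t := hfin p hp0 hpsum n
      _ = 1 := hps.tsum_eq
  have hQsum : Summable q := summable_of_sum_range_le hq0 hQn
  have hQ1 : ∑' i, q i ≤ 1 := Summable.tsum_le_of_sum_range_le hQsum hQn
  have hq1 : ∀ i, q i ≤ 1 := fun i => le_trans (Summable.le_tsum hQsum i (fun j _ => hq0 j)) hQ1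
  -- first-moment bound
  have hiq_le : ∀ i : ℕ, (i:ℝ) * q i ≤ ∑' t, (A i).indicator (fun t => ent (p t)) t := by
    intro i
    rw [hq_eq, ← tsum_mul_left]
    refine Summable.tsum_le_tsum ?_ ((hpsum.indicator (A i)).mul_left _) (hse.indicator (A i))
    intro t
    by_cases ht : t ∈ A i
    · rw [Set.indicator_of_mem ht, Set.indicator_of_mem ht]
      have hpt0 : 0 < p t := lt_trans (by positivity) ht.1
      have hpt : p t ≤ (2:ℝ) ^ (-(i:ℤ)) := by
        have h2 := ht.2
        have heq : (-((i+1 : ℕ) : ℤ) + 1) = -(i:ℤ) := by push_cast; ring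
        rwa [heq] at h2
      have hlog : (i:ℝ) ≤ Real.logb 2 (1 / p t) := by
        have hrp : ((2:ℝ) ^ (-(i:ℤ))) = (2:ℝ) ^ ((-(i:ℤ) : ℤ) : ℝ) := (Real.rpow_intCast 2 _).symm
        have hlb : Real.logb 2 (p t) ≤ -(i:ℝ) := by
          have := Real.logb_le_logb_of_le one_lt_two hpt0 hpt
          rwa [hrp, Real.logb_rpow two_pos (by norm_num), Int.cast_neg, Int.cast_natCast] at this
        rw [one_div, Real.logb_inv]
        linarith
      calc (i:ℝ) * p t = p t * (i:ℝ) := mul_comm _ _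
        _ ≤ p t * Real.logb 2 (1 / p t) := mul_le_mul_of_nonneg_left hlog hpt0.le
        _ = ent (p t) := rfl
    · simp [Set.indicator_of_notMem ht]
  have hMnn : ∀ n : ℕ, 0 ≤ (n:ℝ) * q n := fun n => mul_nonneg (Nat.cast_nonneg n) (hq0 n)
  have hMn : ∀ n, ∑ i ∈ Finset.range n, (i:ℝ) * q i ≤ H := by
    intro n
    calc ∑ i ∈ Finset.range n, (i:ℝ) * q i
        ≤ ∑ i ∈ Finset.range n, ∑' t, (A i).indicator (fun t => ent (p t)) t :=
          Finset.sum_le_sum fun i _ => hiq_le i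
      _ ≤ ∑' t, ent (p t) := hfin _ hent0 hse n
  have hMsum : Summable (fun i : ℕ => (i:ℝ) * q i) := summable_of_sum_range_le hMnn hMn
  have hM : ∑' i : ℕ, (i:ℝ) * q i ≤ H := Summable.tsum_le_of_sum_range_le hMsum hMn
  -- the parameters
  have hH1 : (1:ℝ) ≤ H + 1 := by linarith
  have hH1p : (0:ℝ) < H + 1 := by linarith
  set l : ℝ := (H + 1) ^ (-(1/3) : ℝ) with hldef
  have hl0 : 0 < l := Real.rpow_pos_of_pos hH1p _
  have hl1 : l ≤ 1 := Real.rpow_le_one_of_one_le_of_nonpos hH1 (by norm_num)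
  set b : ℝ := (2:ℝ) ^ (-l) with hbdef
  have hb0 : 0 < b := Real.rpow_pos_of_pos two_pos _
  have hb1 : b < 1 := Real.rpow_lt_one_of_one_lt_of_neg one_lt_two (by linarith)
  have hlog2 : (0.6931471803:ℝ) < Real.log 2 := Real.log_two_gt_d9
  have hlog2p : (0:ℝ) < Real.log 2 := Real.log_pos one_lt_two
  -- 1 - b ≥ l/3
  have hb_le : b ≤ 1/(1 + l * Real.log 2) := by
    have he : (1 + l * Real.log 2) ≤ Real.exp (l * Real.log 2) := by
      have := Real.add_one_le_exp (l * Real.log 2); linarith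
    have hbe : b = (Real.exp (l * Real.log 2))⁻¹ := by
      rw [hbdef, Real.rpow_def_of_pos two_pos, ← Real.exp_neg]
      ring_nf
    rw [hbe, one_div]
    exact inv_anti₀ (by positivity) he
  have h1b : l/3 ≤ 1 - b := by
    have h2 : 1/(1 + l * Real.log 2) ≤ 1 - l/3 := by
      rw [div_le_iff₀ (by positivity)]
      have hll : l * l ≤ l := by nlinarith [hl0, hl1]
      have hstep : l * l * Real.log 2 ≤ l * Real.log 2 :=
        mul_le_mul_of_nonneg_right hll hlog2p.le
      nlinarith [hstep, mul_lt_mul_of_pos_left hlog2 hl0]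
    linarith
  have h1b0 : (0:ℝ) < 1 - b := lt_of_lt_of_le (by positivity) h1b
  set c : ℝ := Real.logb 2 (1/(1-b)) with hcdef
  have hc0 : 0 ≤ c := Real.logb_nonneg one_lt_two (one_le_one_div h1b0 (by linarith))
  -- Gibbs comparison
  have hr0 : ∀ i : ℕ, 0 < (1-b) * b^(i+1) := fun i => mul_pos h1b0 (pow_pos hb0 _)
  have hlogb_b : Real.logb 2 b = -l := by
    rw [hbdef]; exact Real.logb_rpow two_pos (by norm_num)
  have hlog_r : ∀ i : ℕ, Real.logb 2 (1/((1-b) * b^(i+1))) = c + ((i:ℝ)+1) * l := by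
    intro i
    rw [one_div, Real.logb_inv, Real.logb_mul h1b0.ne' (pow_pos hb0 (i+1)).ne',
      Real.logb_pow, hlogb_b, hcdef, one_div, Real.logb_inv]
    push_cast; ring
  have hGi : ∀ i : ℕ, ent (q i) ≤ l * ((i:ℝ) * q i) + (l + c) * q i
      + ((1-b) * b / Real.log 2) * b^i := by
    intro i
    have hG := ent_le_gibbs (hq0 i) (hr0 i)
    rw [hlog_r i] at hG
    calc ent (q i) ≤ q i * (c + ((i:ℝ)+1) * l) + (1-b) * b^(i+1) / Real.log 2 := hG
      _ = l * ((i:ℝ) * q i) + (l + c) * q i + ((1-b) * b / Real.log 2) * b^i := by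
          rw [pow_succ]; ring
  have hgeom : Summable (fun i : ℕ => ((1-b) * b / Real.log 2) * b^i) :=
    (summable_geometric_of_lt_one hb0.le hb1).mul_left _
  have hRs : Summable (fun i : ℕ => l * ((i:ℝ) * q i) + (l + c) * q i
      + ((1-b) * b / Real.log 2) * b^i) :=
    ((hMsum.mul_left l).add (hQsum.mul_left (l+c))).add hgeom
  have hLs : Summable (fun i => ent (q i)) :=
    Summable.of_nonneg_of_le (fun i => ent_nonneg (hq0 i) (hq1 i)) hGi hRs
  have htot : ∑' i, ent (q i) ≤ l * H + (l + c) + ((1-b) * b / Real.log 2) * (1-b)⁻¹ := by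
    calc ∑' i, ent (q i)
        ≤ ∑' i : ℕ, (l * ((i:ℝ) * q i) + (l + c) * q i + ((1-b) * b / Real.log 2) * b^i) :=
          Summable.tsum_le_tsum hGi hLs hRs
      _ = l * (∑' i : ℕ, (i:ℝ) * q i) + (l + c) * (∑' i, q i)
          + ((1-b) * b / Real.log 2) * (1-b)⁻¹ := by
          rw [Summable.tsum_add ((hMsum.mul_left l).add (hQsum.mul_left (l+c))) hgeom,
            Summable.tsum_add (hMsum.mul_left l) (hQsum.mul_left (l+c)),
            tsum_mul_left, tsum_mul_left, tsum_mul_left,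
            tsum_geometric_of_lt_one hb0.le hb1]
      _ ≤ l * H + (l + c) * 1 + ((1-b) * b / Real.log 2) * (1-b)⁻¹ :=
          add_le_add (add_le_add (mul_le_mul_of_nonneg_left hM hl0.le)
            (mul_le_mul_of_nonneg_left hQ1 (by linarith))) le_rfl
      _ = l * H + (l + c) + ((1-b) * b / Real.log 2) * (1-b)⁻¹ := by ring
  have hgeo_val : ((1-b) * b / Real.log 2) * (1-b)⁻¹ ≤ 1.5 := by
    have heq : ((1-b) * b / Real.log 2) * (1-b)⁻¹ = b / Real.log 2 := by
      field_simp
    rw [heq, div_le_iff₀ hlog2p]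
    nlinarith [hb1, hlog2]
  -- bound on c
  have hc_le : c ≤ 2 + (3/4) * (H+1) ^ (2/3 : ℝ) := by
    have h3l : 1/(1-b) ≤ 3/l := by
      rw [div_le_div_iff₀ h1b0 hl0]
      nlinarith [h1b]
    have step1 : c ≤ Real.logb 2 (3/l) :=
      Real.logb_le_logb_of_le one_lt_two (by positivity) h3l
    have hlinv : (3:ℝ)/l = 3 * (H+1) ^ ((1/3 : ℝ)) := by
      rw [hldef, div_eq_mul_inv, Real.rpow_neg hH1p.le, inv_inv]
    have step2 : Real.logb 2 (3/l) = Real.logb 2 3 + (1/3) * Real.logb 2 (H+1) := by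
      rw [hlinv, Real.logb_mul (by norm_num) (by positivity), Real.logb, Real.logb,
        Real.log_rpow hH1p, Real.logb]
      ring
    have hlb3 : Real.logb 2 3 ≤ 2 := by
      have h34 : Real.logb 2 3 ≤ Real.logb 2 4 :=
        Real.logb_le_logb_of_le one_lt_two (by norm_num) (by norm_num)
      have h4 : Real.logb 2 4 = 2 := by
        rw [show (4:ℝ) = 2^(2:ℕ) by norm_num, Real.logb_pow, Real.logb_self_eq_one one_lt_two]
        norm_num
      linarith
    have hy : (0:ℝ) < (H+1) ^ (2/3 : ℝ) := Real.rpow_pos_of_pos hH1p _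
    have hlogH : Real.logb 2 (H+1) ≤ (9/4) * (H+1) ^ (2/3 : ℝ) := by
      have h1 : Real.log ((H+1) ^ (2/3 : ℝ)) ≤ (H+1) ^ (2/3 : ℝ) - 1 :=
        Real.log_le_sub_one_of_pos hy
      have h2 : Real.log ((H+1) ^ (2/3 : ℝ)) = (2/3) * Real.log (H+1) :=
        Real.log_rpow hH1p _
      rw [Real.logb, div_le_iff₀ hlog2p]
      nlinarith [hlog2, hy]
    calc c ≤ Real.logb 2 3 + (1/3) * Real.logb 2 (H+1) := by rw [← step2]; exact step1
      _ ≤ 2 + (3/4) * (H+1) ^ (2/3 : ℝ) := by linarith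
  -- l * (H+1) = (H+1)^(2/3)
  have hlH : l * (H+1) = (H+1) ^ (2/3 : ℝ) := by
    calc l * (H+1) = (H+1) ^ (-(1/3) : ℝ) * (H+1) ^ (1 : ℝ) := by rw [Real.rpow_one, hldef]
      _ = (H+1) ^ ((-(1/3)) + 1 : ℝ) := (Real.rpow_add hH1p _ _).symm
      _ = (H+1) ^ (2/3 : ℝ) := by norm_num
  -- (H+1)^(2/3) ≤ 2 H^(2/3) + 2
  have h23 : (2:ℝ) ^ (2/3 : ℝ) ≤ 2 := by
    have := Real.rpow_le_rpow_of_exponent_le (one_le_two (α := ℝ)) (by norm_num : (2/3:ℝ) ≤ 1)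
    rwa [Real.rpow_one] at this
  have hy0 : (0:ℝ) ≤ H ^ (2/3 : ℝ) := Real.rpow_nonneg hH0 _
  have hY2 : (H+1) ^ (2/3 : ℝ) ≤ 2 * H ^ (2/3 : ℝ) + 2 := by
    rcases le_total H 1 with h | h
    · have h1 : (H+1) ^ (2/3 : ℝ) ≤ (2:ℝ) ^ (2/3 : ℝ) :=
        Real.rpow_le_rpow (by linarith) (by linarith) (by norm_num)
      linarith
    · have h1 : (H+1) ^ (2/3 : ℝ) ≤ (2*H) ^ (2/3 : ℝ) :=
        Real.rpow_le_rpow (by linarith) (by linarith) (by norm_num)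
      have h2 : (2*H) ^ (2/3 : ℝ) = (2:ℝ) ^ (2/3 : ℝ) * H ^ (2/3 : ℝ) :=
        Real.mul_rpow (by norm_num) (by linarith)
      nlinarith
  have final : ∑' i, ent (q i) ≤ 100 * (H ^ (2/3 : ℝ) + 1) := by
    calc ∑' i, ent (q i) ≤ l * H + (l + c) + ((1-b) * b / Real.log 2) * (1-b)⁻¹ := htot
      _ ≤ l * H + l + c + 1.5 := by linarith
      _ = l * (H+1) + c + 1.5 := by ring
      _ = (H+1) ^ (2/3 : ℝ) + c + 1.5 := by rw [hlH]
      _ ≤ (H+1) ^ (2/3 : ℝ) + (2 + (3/4) * (H+1) ^ (2/3 : ℝ)) + 1.5 := by linarith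
      _ ≤ 100 * (H ^ (2/3 : ℝ) + 1) := by nlinarith [hY2, hy0]
  calc (∑' i : ℕ, ent (dyadicMass p (i + 1))) = ∑' i, ent (q i) :=
      tsum_congr fun i => by rw [hqdef]
    _ ≤ 100 * (H ^ (2/3 : ℝ) + 1) := final
end

section
/- There exists a universal constant C > 0 such that for every probability distribution p = (p_t)_{t∈T} on a countable set T with finite Shannon entropy H, and every α with 0 < α < 1, the entropy of the dyadic-level coarsening satisfies Σ_{i≥1} q_i·log₂(1/q_i) ≤ (1−α)·H + C·(1 + 1/(1−α)²), with the convention 0·log₂(1/0) = 0. -/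
lemma ent_le {q a : ℝ} (hq : 0 ≤ q) (ha : 0 ≤ a) :
    ent q ≤ a * q + 2 * (2:ℝ) ^ (-a) := by
  have hr : (0:ℝ) < (2:ℝ) ^ (-a) := Real.rpow_pos_of_pos two_pos _
  rcases eq_or_lt_of_le hq with h | h
  · simp [ent, ← h]
    positivity
  · have hlog2 : (0:ℝ) < Real.log 2 := Real.log_pos one_lt_two
    have hl2 : (1:ℝ)/2 ≤ Real.log 2 := by
      have := Real.log_two_gt_d9; linarith
    have hx : (0:ℝ) < (2:ℝ) ^ (-a) / q := by positivity
    have h1 : Real.log ((2:ℝ) ^ (-a) / q) ≤ (2:ℝ) ^ (-a) / q - 1 :=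
      Real.log_le_sub_one_of_pos hx
    have h2 : Real.log (1 / q) = Real.log ((2:ℝ) ^ (-a) / q) + a * Real.log 2 := by
      rw [Real.log_div (ne_of_gt hr) (ne_of_gt h), Real.log_div one_ne_zero (ne_of_gt h),
        Real.log_rpow two_pos]
      simp; ring
    have key : q * Real.log (1 / q) ≤ a * q * Real.log 2 + (2:ℝ) ^ (-a) := by
      have h3 : q * Real.log ((2:ℝ) ^ (-a) / q) ≤ q * ((2:ℝ) ^ (-a) / q - 1) :=
        mul_le_mul_of_nonneg_left h1 h.le
      have h4 : q * ((2:ℝ) ^ (-a) / q - 1) = (2:ℝ) ^ (-a) - q := by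
        field_simp
      nlinarith [h2, h3, h4]
    have hent : ent q = q * Real.log (1 / q) / Real.log 2 := by
      rw [ent, Real.logb]; ring
    rw [hent]
    rw [div_le_iff₀ hlog2]
    calc q * Real.log (1 / q) ≤ a * q * Real.log 2 + (2:ℝ) ^ (-a) := key
      _ ≤ (a * q + 2 * (2:ℝ) ^ (-a)) * Real.log 2 := by nlinarith

/-- For every `0 < α < 1`, the entropy of the dyadic-level coarsening of a countable
distribution is at most `(1-α)·H + C·(1 + 1/(1-α)²)` for a universal constant `C`. -/
theorem dyadic_coarsening_entropy_alpha :
    ∃ C : ℝ, 0 < C ∧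
      ∀ (T : Type) [Countable T] (p : T → ℝ),
        (∀ t, 0 ≤ p t) → HasSum p 1 →
        Summable (fun t => ent (p t)) →
        ∀ α : ℝ, 0 < α → α < 1 →
        (∑' i : ℕ, ent (dyadicMass p (i + 1))) ≤
          (1 - α) * (∑' t, ent (p t)) + C * (1 + 1 / (1 - α) ^ 2) := by
  refine ⟨8, by norm_num, ?_⟩
  intro T _ p hp hsum hent α hα0 hα1
  have hβ0 : (0:ℝ) < 1 - α := by linarith
  have hβ1 : 1 - α < 1 := by linarith
  set β : ℝ := 1 - α with hβ
  set H : ℝ := ∑' t, ent (p t) with hH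
  set g : T → ℝ := fun t => ent (p t) with hg
  set S : ℕ → Set T := fun i =>
    {t | (2:ℝ) ^ (-(i:ℤ) - 1) < p t ∧ p t ≤ (2:ℝ) ^ (-(i:ℤ))} with hS
  set q : ℕ → ℝ := fun i => ∑' t, (S i).indicator p t with hq
  have hpsum : Summable p := hsum.summable
  have hgsum : Summable g := hent
  have hp1 : ∀ t, p t ≤ 1 := fun t => le_hasSum hsum t fun j _ => hp j
  have hgnn : ∀ t, 0 ≤ g t := fun t => ent_nonneg (hp t) (hp1 t)
  -- identification of dyadicMass with q
  have hqi : ∀ i : ℕ, dyadicMass p (i + 1) = q i := by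
    intro i
    have hsets : {t : T | (2:ℝ) ^ (-((i+1:ℕ):ℤ)) < p t ∧ p t ≤ (2:ℝ) ^ (-((i+1:ℕ):ℤ) + 1)}
        = S i := by
      have e1 : (-((i+1:ℕ):ℤ)) = -(i:ℤ) - 1 := by push_cast; ring
      have e2 : (-((i+1:ℕ):ℤ) + 1) = -(i:ℤ) := by push_cast; ring
      ext t
      simp only [hS, Set.mem_setOf_eq, e1, e2]
      rw [show (-(i:ℤ) - 1 + 1) = -(i:ℤ) by ring]
    have h1 : dyadicMass p (i + 1)
        = ∑' t : ↥{t : T | (2:ℝ) ^ (-((i+1:ℕ):ℤ)) < p t ∧ p t ≤ (2:ℝ) ^ (-((i+1:ℕ):ℤ) + 1)},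
            p t := rfl
    rw [h1, hsets, tsum_subtype]
  have hq0 : ∀ i, 0 ≤ q i := by
    intro i
    exact tsum_nonneg fun t => Set.indicator_nonneg (fun t _ => hp t) t
  have hq1 : ∀ i, q i ≤ 1 := by
    intro i
    have : q i ≤ ∑' t, p t :=
      Summable.tsum_le_tsum (fun t => Set.indicator_le_self' (fun t _ => hp t) t)
        (hpsum.indicator _) hpsum
    rwa [hsum.tsum_eq] at this
  -- disjointness of level sets
  have hdisj : ∀ i j : ℕ, i ≠ j → ∀ t : T, t ∈ S i → t ∈ S j → False := by
    have key : ∀ i j : ℕ, i < j → ∀ t : T, t ∈ S i → t ∈ S j → False := by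
      intro i j hij t hi hj
      have h2 : (2:ℝ) ^ (-(j:ℤ)) ≤ (2:ℝ) ^ (-(i:ℤ) - 1) := by
        apply zpow_le_zpow_right₀ one_le_two
        omega
      have := hi.1
      have := hj.2
      simp only [hS, Set.mem_setOf_eq] at hi hj
      linarith [hi.1, hj.2]
    intro i j hij t hi hj
    rcases lt_or_gt_of_ne hij with h | h
    · exact key i j h t hi hj
    · exact key j i h t hj hi
  -- key comparison on each level set
  have hiq : ∀ i : ℕ, (i:ℝ) * q i ≤ ∑' t, (S i).indicator g t := by
    intro i
    rw [hq]
    simp only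
    rw [← tsum_mul_left]
    refine Summable.tsum_le_tsum ?_ ((hpsum.indicator _).mul_left _) (hgsum.indicator _)
    intro t
    by_cases ht : t ∈ S i
    · rw [Set.indicator_of_mem ht, Set.indicator_of_mem ht]
      have hti := ht
      simp only [hS, Set.mem_setOf_eq] at hti
      have hpt0 : 0 < p t := lt_trans (zpow_pos two_pos _) hti.1
      have hub : p t ≤ ((2:ℝ) ^ (i:ℕ))⁻¹ := by
        have : (2:ℝ) ^ (-(i:ℤ)) = ((2:ℝ) ^ (i:ℕ))⁻¹ := by
          rw [zpow_neg, zpow_natCast]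
        rw [← this]; exact hti.2
      have hlb : (2:ℝ) ^ ((i:ℕ):ℝ) ≤ 1 / p t := by
        rw [Real.rpow_natCast]
        calc (2:ℝ) ^ (i:ℕ) = 1 / ((2:ℝ) ^ (i:ℕ))⁻¹ := by
              rw [one_div, inv_inv]
          _ ≤ 1 / p t := one_div_le_one_div_of_le hpt0 hub
      have hlog : (i:ℝ) ≤ Real.logb 2 (1 / p t) :=
        (Real.le_logb_iff_rpow_le one_lt_two (by positivity)).mpr hlb
      calc (i:ℝ) * p t = p t * (i:ℝ) := by ring
        _ ≤ p t * Real.logb 2 (1 / p t) := mul_le_mul_of_nonneg_left hlog hpt0.le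
        _ = g t := rfl
    · simp [Set.indicator_of_notMem ht]
  -- bounded partial sums
  have hiq_nonneg : ∀ i : ℕ, 0 ≤ (i:ℝ) * q i := fun i =>
    mul_nonneg (Nat.cast_nonneg i) (hq0 i)
  have hpart : ∀ F : Finset ℕ, ∑ i ∈ F, (i:ℝ) * q i ≤ H := by
    intro F
    have hptwise : ∀ t : T, ∑ i ∈ F, (S i).indicator g t ≤ g t := by
      intro t
      by_cases h : ∃ j ∈ F, t ∈ S j
      · obtain ⟨j, hjF, hj⟩ := h
        have : ∑ i ∈ F, (S i).indicator g t = (S j).indicator g t := by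
          refine Finset.sum_eq_single_of_mem j hjF ?_
          intro i _ hij
          refine Set.indicator_of_notMem ?_ _
          intro hi
          exact hdisj i j hij t hi hj
        rw [this, Set.indicator_of_mem hj]
      · push_neg at h
        have : ∑ i ∈ F, (S i).indicator g t = 0 := by
          refine Finset.sum_eq_zero ?_
          intro i hi
          exact Set.indicator_of_notMem (h i hi) _
        rw [this]; exact hgnn t
    calc ∑ i ∈ F, (i:ℝ) * q i
        ≤ ∑ i ∈ F, ∑' t, (S i).indicator g t := Finset.sum_le_sum fun i _ => hiq i
      _ = ∑' t, ∑ i ∈ F, (S i).indicator g t :=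
          (Summable.tsum_finsetSum fun i _ => hgsum.indicator _).symm
      _ ≤ ∑' t, g t := by
          refine Summable.tsum_le_tsum hptwise ?_ hgsum
          exact summable_sum fun i _ => hgsum.indicator _
      _ = H := rfl
  have hMsum : Summable (fun i : ℕ => (i:ℝ) * q i) :=
    summable_of_sum_le hiq_nonneg hpart
  have hM : ∑' i : ℕ, (i:ℝ) * q i ≤ H := Summable.tsum_le_of_sum_le hMsum hpart
  -- geometric tail
  set r : ℝ := (2:ℝ) ^ (-β) with hr
  have hr0 : 0 ≤ r := (Real.rpow_pos_of_pos two_pos _).le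
  have hr1 : r < 1 := Real.rpow_lt_one_of_one_lt_of_neg one_lt_two (by linarith)
  have hrpow : ∀ i : ℕ, (2:ℝ) ^ (-(β * (i:ℝ))) = r ^ i := by
    intro i
    rw [show -(β * (i:ℝ)) = (-β) * (i:ℝ) by ring, Real.rpow_mul (by norm_num),
      Real.rpow_natCast]
  have hquarter : β / 4 ≤ 1 - r := by
    have hE : r * Real.exp (β * Real.log 2) = 1 := by
      rw [hr, Real.rpow_def_of_pos two_pos, ← Real.exp_add,
        show Real.log 2 * -β + β * Real.log 2 = 0 by ring, Real.exp_zero]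
    have h1 : β * Real.log 2 + 1 ≤ Real.exp (β * Real.log 2) := Real.add_one_le_exp _
    have hl2 : (1:ℝ)/2 ≤ Real.log 2 := by
      have := Real.log_two_gt_d9; linarith
    have hl2' : Real.log 2 ≤ 1 := by
      have := Real.log_two_lt_d9; linarith
    have hrpos : 0 < r := Real.rpow_pos_of_pos two_pos _
    have hkey : r * (β * Real.log 2) + r ≤ 1 := by
      nlinarith [mul_le_mul_of_nonneg_left h1 hrpos.le]
    rcases le_or_gt r (3/4) with h | h
    · nlinarith
    · nlinarith [mul_pos hβ0 hrpos]
  have hb : ∀ i : ℕ, ent (q i) ≤ β * ((i:ℝ) * q i) + 2 * r ^ i := by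
    intro i
    have := ent_le (hq0 i) (a := β * (i:ℝ))
      (mul_nonneg hβ0.le (Nat.cast_nonneg i))
    rw [hrpow i] at this
    nlinarith [this]
  have hrsum : Summable (fun i : ℕ => r ^ i) := summable_geometric_of_lt_one hr0 hr1
  have hRHSsum : Summable (fun i : ℕ => β * ((i:ℝ) * q i) + 2 * r ^ i) :=
    (hMsum.mul_left β).add (hrsum.mul_left 2)
  have hLHSsum : Summable (fun i : ℕ => ent (q i)) :=
    Summable.of_nonneg_of_le (fun i => ent_nonneg (hq0 i) (hq1 i)) hb hRHSsum
  have hgeo : ∑' i : ℕ, r ^ i = (1 - r)⁻¹ := tsum_geometric_of_lt_one hr0 hr1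
  have h1r : 0 < 1 - r := lt_of_lt_of_le (by positivity) hquarter
  have hfinal : β * H + 2 * (1 - r)⁻¹ ≤ (1 - α) * H + 8 * (1 + 1 / (1 - α) ^ 2) := by
    have hinv : (1 - r)⁻¹ ≤ 4 / β := by
      rw [← inv_div β 4]
      exact inv_anti₀ (by positivity) (by linarith)
    have hββ : β ^ 2 ≤ β := by nlinarith
    have h8 : 4 / β ≤ 4 / β ^ 2 :=
      div_le_div_of_nonneg_left (by norm_num) (by positivity) hββ
    have : 2 * (1 - r)⁻¹ ≤ 8 / β ^ 2 := by
      calc 2 * (1 - r)⁻¹ ≤ 2 * (4 / β) := by linarith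
        _ ≤ 2 * (4 / β ^ 2) := by linarith
        _ = 8 / β ^ 2 := by ring
    have hβα : β = 1 - α := hβ
    rw [hβα] at this ⊢
    have hpos : 0 < (1 - α) ^ 2 := by positivity
    have : 2 * (1 - r)⁻¹ ≤ 8 * (1 + 1 / (1 - α) ^ 2) := by
      have h9 : 8 / (1 - α) ^ 2 = 8 * (1 / (1 - α) ^ 2) := by ring
      nlinarith
    linarith
  calc ∑' i : ℕ, ent (dyadicMass p (i + 1))
      = ∑' i : ℕ, ent (q i) := tsum_congr fun i => by rw [hqi i]
    _ ≤ ∑' i : ℕ, (β * ((i:ℝ) * q i) + 2 * r ^ i) := Summable.tsum_le_tsum hb hLHSsum hRHSsum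
    _ = β * (∑' i : ℕ, (i:ℝ) * q i) + 2 * (1 - r)⁻¹ := by
        rw [Summable.tsum_add (hMsum.mul_left β) (hrsum.mul_left 2), tsum_mul_left, tsum_mul_left,
          hgeo]
    _ ≤ β * H + 2 * (1 - r)⁻¹ :=
        add_le_add (mul_le_mul_of_nonneg_left hM hβ0.le) le_rfl
    _ ≤ (1 - α) * H + 8 * (1 + 1 / (1 - α) ^ 2) := hfinal
end

section
/- Let μ be a probability measure on ℝ² that is absolutely continuous with respect to Lebesgue measure, let t ⊆ ℝ² be a triangle, and let x ∈ ℝ² be any point. Then there exists a line ℓ through x such that, letting h₀ and h₁ denote the two open halfplanes bounded by ℓ, one has μ(t ∩ h₀) ≤ μ(t)/2 and μ(t ∩ h₁) ≤ μ(t)/2. -/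
open MeasureTheory

/- ### Auxiliary material -/

/-- The signed distance-like function for the line through `x` with normal `(cos θ, sin θ)`. -/
noncomputable def dfun (x : ℝ × ℝ) (θ : ℝ) (p : ℝ × ℝ) : ℝ :=
  Real.cos θ * (p.1 - x.1) + Real.sin θ * (p.2 - x.2)

/-- The open halfplane on the positive side. -/
def Hset (x : ℝ × ℝ) (θ : ℝ) : Set (ℝ × ℝ) := {p | 0 < dfun x θ p}

lemma continuous_dfun (x : ℝ × ℝ) (θ : ℝ) : Continuous (dfun x θ) := by
  unfold dfun; fun_prop

lemma dfun_add_pi (x : ℝ × ℝ) (θ : ℝ) (p : ℝ × ℝ) :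
    dfun x (θ + Real.pi) p = - dfun x θ p := by
  simp only [dfun, Real.cos_add_pi, Real.sin_add_pi]; ring

lemma dfun_add_two_pi (x : ℝ × ℝ) (θ : ℝ) (p : ℝ × ℝ) :
    dfun x (θ + 2 * Real.pi) p = dfun x θ p := by
  simp only [dfun, Real.cos_add_two_pi, Real.sin_add_two_pi]

lemma Hset_add_pi (x : ℝ × ℝ) (θ : ℝ) :
    Hset x (θ + Real.pi) = {p | dfun x θ p < 0} := by
  ext p; simp [Hset, dfun_add_pi, neg_pos]

lemma Hset_add_two_pi (x : ℝ × ℝ) (θ : ℝ) :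
    Hset x (θ + 2 * Real.pi) = Hset x θ := by
  ext p; simp [Hset, dfun_add_two_pi]

/-- A nondegenerate line in the plane has Lebesgue measure zero. -/
lemma volume_line (a b c : ℝ) (hab : ¬ (a = 0 ∧ b = 0)) :
    volume {p : ℝ × ℝ | a * p.1 + b * p.2 = c} = 0 := by
  have hmeas : MeasurableSet {p : ℝ × ℝ | a * p.1 + b * p.2 = c} :=
    measurableSet_eq_fun (by fun_prop) measurable_const
  by_cases hb : b = 0
  · have ha : a ≠ 0 := fun h => hab ⟨h, hb⟩
    have hset : {p : ℝ × ℝ | a * p.1 + b * p.2 = c} = {c / a} ×ˢ (Set.univ : Set ℝ) := by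
      ext p
      simp only [Set.mem_setOf_eq, Set.mem_prod, Set.mem_singleton_iff, Set.mem_univ, and_true, hb]
      constructor
      · intro h; field_simp; linarith
      · intro h; rw [h]; field_simp; ring
    rw [hset, Measure.volume_eq_prod ℝ ℝ, Measure.prod_prod, Real.volume_singleton,
      zero_mul]
  · rw [Measure.volume_eq_prod ℝ ℝ, Measure.measure_prod_null hmeas]
    filter_upwards with y
    have : Prod.mk y ⁻¹' {p : ℝ × ℝ | a * p.1 + b * p.2 = c} = {(c - a * y) / b} := by
      ext z
      simp only [Set.mem_preimage, Set.mem_setOf_eq, Set.mem_singleton_iff]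
      rw [eq_div_iff hb]
      constructor <;> intro h <;> linarith
    simp [this]

/-- The boundary line of `Hset x θ` is `μ`-null. -/
lemma measure_line_zero (μ : Measure (ℝ × ℝ)) (hac : μ ≪ volume) (x : ℝ × ℝ) (θ : ℝ) :
    μ {p : ℝ × ℝ | dfun x θ p = 0} = 0 := by
  have hset : {p : ℝ × ℝ | dfun x θ p = 0}
      = {p : ℝ × ℝ | Real.cos θ * p.1 + Real.sin θ * p.2
          = Real.cos θ * x.1 + Real.sin θ * x.2} := by
    ext p; simp only [Set.mem_setOf_eq, dfun]; constructor <;> intro h <;> linarith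
  have hab : ¬ (Real.cos θ = 0 ∧ Real.sin θ = 0) := by
    rintro ⟨h1, h2⟩
    have := Real.sin_sq_add_cos_sq θ
    rw [h1, h2] at this; norm_num at this
  rw [hset]
  exact hac (volume_line _ _ _ hab)

/-- Lipschitz estimate for `dfun` in the angle. -/
lemma dfun_lip (x : ℝ × ℝ) (θ θ' : ℝ) (p : ℝ × ℝ) :
    |dfun x θ p - dfun x θ' p| ≤ |θ - θ'| * (|p.1 - x.1| + |p.2 - x.2|) := by
  have hc : |Real.cos θ - Real.cos θ'| ≤ |θ - θ'| := by
    rw [Real.cos_sub_cos, abs_mul, abs_mul]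
    have h1 : |Real.sin ((θ + θ') / 2)| ≤ 1 := Real.abs_sin_le_one _
    have h2 : |Real.sin ((θ - θ') / 2)| ≤ |(θ - θ') / 2| := Real.abs_sin_le_abs
    have h3 : |(θ - θ') / 2| = |θ - θ'| / 2 := by rw [abs_div]; norm_num
    simp only [abs_neg, abs_two]
    nlinarith [abs_nonneg (Real.sin ((θ + θ') / 2)), abs_nonneg (Real.sin ((θ - θ') / 2))]
  have hs : |Real.sin θ - Real.sin θ'| ≤ |θ - θ'| := by
    rw [Real.sin_sub_sin, abs_mul, abs_mul]
    have h1 : |Real.cos ((θ + θ') / 2)| ≤ 1 := Real.abs_cos_le_one _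
    have h2 : |Real.sin ((θ - θ') / 2)| ≤ |(θ - θ') / 2| := Real.abs_sin_le_abs
    have h3 : |(θ - θ') / 2| = |θ - θ'| / 2 := by rw [abs_div]; norm_num
    simp only [abs_two]
    nlinarith [abs_nonneg (Real.cos ((θ + θ') / 2)), abs_nonneg (Real.sin ((θ - θ') / 2))]
  have hexp : dfun x θ p - dfun x θ' p
      = (Real.cos θ - Real.cos θ') * (p.1 - x.1) + (Real.sin θ - Real.sin θ') * (p.2 - x.2) := by
    simp only [dfun]; ring
  rw [hexp]
  calc |(Real.cos θ - Real.cos θ') * (p.1 - x.1) + (Real.sin θ - Real.sin θ') * (p.2 - x.2)|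
      ≤ |(Real.cos θ - Real.cos θ') * (p.1 - x.1)| + |(Real.sin θ - Real.sin θ') * (p.2 - x.2)| :=
        abs_add_le _ _
    _ = |Real.cos θ - Real.cos θ'| * |p.1 - x.1| + |Real.sin θ - Real.sin θ'| * |p.2 - x.2| := by
        rw [abs_mul, abs_mul]
    _ ≤ |θ - θ'| * |p.1 - x.1| + |θ - θ'| * |p.2 - x.2| :=
        add_le_add (mul_le_mul_of_nonneg_right hc (abs_nonneg _))
          (mul_le_mul_of_nonneg_right hs (abs_nonneg _))
    _ = |θ - θ'| * (|p.1 - x.1| + |p.2 - x.2|) := by ring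

/-- The weight function. -/
noncomputable def wfun (x : ℝ × ℝ) (p : ℝ × ℝ) : ℝ := |p.1 - x.1| + |p.2 - x.2|

/-- The wedge set of angular width `δ` around the line at angle `θ₀`. -/
noncomputable def Wset (x : ℝ × ℝ) (θ₀ δ : ℝ) : Set (ℝ × ℝ) :=
  {p | |dfun x θ₀ p| ≤ δ * wfun x p}

lemma wfun_nonneg (x p : ℝ × ℝ) : 0 ≤ wfun x p := add_nonneg (abs_nonneg _) (abs_nonneg _)

lemma measurableSet_Wset (x : ℝ × ℝ) (θ₀ δ : ℝ) : MeasurableSet (Wset x θ₀ δ) := by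
  apply measurableSet_le
  · exact ((continuous_dfun x θ₀).abs).measurable
  · unfold wfun; fun_prop

lemma Wset_mono (x : ℝ × ℝ) (θ₀ : ℝ) {δ δ' : ℝ} (h : δ ≤ δ') :
    Wset x θ₀ δ ⊆ Wset x θ₀ δ' := fun p hp =>
  le_trans hp (mul_le_mul_of_nonneg_right h (wfun_nonneg x p))

/-- Symmetric-difference inclusion: the positive halfplane at angle `θ` is contained in the
positive halfplane at angle `θ₀` together with the wedge of width `|θ - θ₀|`. -/
lemma Hset_subset_wedge (x : ℝ × ℝ) (θ₀ θ : ℝ) :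
    Hset x θ ⊆ Hset x θ₀ ∪ Wset x θ₀ |θ - θ₀| := by
  intro p hpθ
  by_cases h : p ∈ Hset x θ₀
  · exact Or.inl h
  · refine Or.inr ?_
    have h1 : dfun x θ₀ p ≤ 0 := not_lt.mp h
    have h2 : 0 < dfun x θ p := hpθ
    have h3 : |dfun x θ₀ p| ≤ |dfun x θ p - dfun x θ₀ p| := by
      rw [abs_of_nonpos h1, abs_of_nonneg (by linarith : 0 ≤ dfun x θ p - dfun x θ₀ p)]
      linarith
    exact le_trans h3 (dfun_lip x θ θ₀ p)

/-- The reverse inclusion (wedge still centered at `θ₀`). -/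
lemma Hset_subset_wedge' (x : ℝ × ℝ) (θ₀ θ : ℝ) :
    Hset x θ₀ ⊆ Hset x θ ∪ Wset x θ₀ |θ - θ₀| := by
  intro p hp₀
  by_cases h : p ∈ Hset x θ
  · exact Or.inl h
  · refine Or.inr ?_
    have h1 : dfun x θ p ≤ 0 := not_lt.mp h
    have h2 : 0 < dfun x θ₀ p := hp₀
    have h3 : |dfun x θ₀ p| ≤ |dfun x θ p - dfun x θ₀ p| := by
      rw [abs_of_nonneg (le_of_lt h2), abs_of_nonpos (by linarith : dfun x θ p - dfun x θ₀ p ≤ 0)]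
      linarith
    exact le_trans h3 (dfun_lip x θ θ₀ p)

/-- For any absolutely continuous probability measure, any triangle `t`, and any
point `x`, there is a line through `x` (with normal vector `(a,b) ≠ (0,0)`) whose
two open halfplanes each contain at most half of the measure of `t`. -/
theorem halving_line_through_point
    (μ : Measure (ℝ × ℝ)) [IsProbabilityMeasure μ] (hac : μ ≪ volume)
    (t : Set (ℝ × ℝ)) (ht : IsTriangle t) (x : ℝ × ℝ) :
    ∃ a b : ℝ, (a, b) ≠ ((0 : ℝ), (0 : ℝ)) ∧
      μ (t ∩ {p : ℝ × ℝ | 0 < a * (p.1 - x.1) + b * (p.2 - x.2)}) ≤ μ t / 2 ∧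
      μ (t ∩ {p : ℝ × ℝ | a * (p.1 - x.1) + b * (p.2 - x.2) < 0}) ≤ μ t / 2 := by
  classical
  obtain ⟨A, B, C, hts⟩ := ht
  have htm : MeasurableSet t := by
    rw [hts]
    exact MeasurableSet.iInter fun i =>
      measurableSet_le (by fun_prop) measurable_const
  have hfin : ∀ s : Set (ℝ × ℝ), μ s ≠ ⊤ := fun s => measure_ne_top μ s
  -- the line through x at angle θ is μ-null
  have hline : ∀ θ : ℝ, μ (t ∩ {p | dfun x θ p = 0}) = 0 := fun θ =>
    measure_mono_null Set.inter_subset_right (measure_line_zero μ hac x θ)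
  -- the two open halfplanes add up to μ t
  have hsum : ∀ θ : ℝ, μ (t ∩ Hset x θ) + μ (t ∩ Hset x (θ + Real.pi)) = μ t := by
    intro θ
    rw [Hset_add_pi]
    have hdisj : Disjoint (t ∩ Hset x θ) (t ∩ {p | dfun x θ p < 0}) := by
      rw [Set.disjoint_left]
      rintro p ⟨-, hp1⟩ ⟨-, hp2⟩
      have hp1' : 0 < dfun x θ p := hp1
      have hp2' : dfun x θ p < 0 := hp2
      linarith
    have hmeas2 : MeasurableSet (t ∩ {p | dfun x θ p < 0}) :=
      htm.inter ((isOpen_lt (continuous_dfun x θ) continuous_const).measurableSet)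
    rw [← measure_union hdisj hmeas2]
    refine le_antisymm (measure_mono (Set.union_subset Set.inter_subset_left
      Set.inter_subset_left)) ?_
    calc μ t ≤ μ ((t ∩ Hset x θ ∪ t ∩ {p | dfun x θ p < 0}) ∪ (t ∩ {p | dfun x θ p = 0})) := by
          apply measure_mono
          intro p hp
          rcases lt_trichotomy (dfun x θ p) 0 with h | h | h
          · exact Or.inl (Or.inr ⟨hp, h⟩)
          · exact Or.inr ⟨hp, h⟩
          · exact Or.inl (Or.inl ⟨hp, h⟩)
      _ ≤ μ (t ∩ Hset x θ ∪ t ∩ {p | dfun x θ p < 0}) + μ (t ∩ {p | dfun x θ p = 0}) :=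
          measure_union_le _ _
      _ = μ (t ∩ Hset x θ ∪ t ∩ {p | dfun x θ p < 0}) := by rw [hline θ, add_zero]
  -- the halving function
  set G : ℝ → ℝ := fun θ => (μ (t ∩ Hset x θ)).toReal with hGdef
  -- measure estimate from the wedge inclusions
  have hGbound : ∀ θ₀ θ : ℝ, |G θ - G θ₀| ≤ (μ (t ∩ Wset x θ₀ |θ - θ₀|)).toReal := by
    intro θ₀ θ
    have key : ∀ (α β : ℝ), t ∩ Hset x α ⊆ (t ∩ Hset x β) ∪ (t ∩ Wset x θ₀ |θ - θ₀|) →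
        G α ≤ G β + (μ (t ∩ Wset x θ₀ |θ - θ₀|)).toReal := by
      intro α β hsub
      have h2 : μ (t ∩ Hset x α) ≤ μ (t ∩ Hset x β) + μ (t ∩ Wset x θ₀ |θ - θ₀|) :=
        le_trans (measure_mono hsub) (measure_union_le _ _)
      have h3 := ENNReal.toReal_mono (ENNReal.add_ne_top.mpr ⟨hfin _, hfin _⟩) h2
      rwa [ENNReal.toReal_add (hfin _) (hfin _)] at h3
    have hs1 : t ∩ Hset x θ ⊆ (t ∩ Hset x θ₀) ∪ (t ∩ Wset x θ₀ |θ - θ₀|) := by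
      intro p ⟨hpt, hp⟩
      rcases Hset_subset_wedge x θ₀ θ hp with h | h
      · exact Or.inl ⟨hpt, h⟩
      · exact Or.inr ⟨hpt, h⟩
    have hs2 : t ∩ Hset x θ₀ ⊆ (t ∩ Hset x θ) ∪ (t ∩ Wset x θ₀ |θ - θ₀|) := by
      intro p ⟨hpt, hp⟩
      rcases Hset_subset_wedge' x θ₀ θ hp with h | h
      · exact Or.inl ⟨hpt, h⟩
      · exact Or.inr ⟨hpt, h⟩
    rw [abs_sub_le_iff]
    exact ⟨by have := key θ θ₀ hs1; linarith, by have := key θ₀ θ hs2; linarith⟩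
  -- the wedges shrink to the null line
  have hWtend : ∀ θ₀ : ℝ, Filter.Tendsto (fun n : ℕ => μ (t ∩ Wset x θ₀ (1 / (n + 1))))
      Filter.atTop (nhds 0) := by
    intro θ₀
    have hanti : Antitone (fun n : ℕ => t ∩ Wset x θ₀ (1 / (n + 1))) := by
      intro m n hmn
      apply Set.inter_subset_inter_right
      apply Wset_mono
      apply one_div_le_one_div_of_le
      · positivity
      · have : (m : ℝ) ≤ n := Nat.cast_le.mpr hmn
        linarith
    have hInter : (⋂ n : ℕ, t ∩ Wset x θ₀ (1 / (n + 1))) ⊆ t ∩ {p | dfun x θ₀ p = 0} := by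
      intro p hp
      simp only [Set.mem_iInter] at hp
      have hpt : p ∈ t := (hp 0).1
      refine ⟨hpt, ?_⟩
      have hle : ∀ n : ℕ, |dfun x θ₀ p| ≤ (1 / (n + 1)) * wfun x p := fun n => (hp n).2
      have h0 : |dfun x θ₀ p| ≤ 0 := by
        by_contra hc
        push_neg at hc
        obtain ⟨n, hn⟩ := exists_nat_gt (wfun x p / |dfun x θ₀ p|)
        have hn1 : wfun x p / |dfun x θ₀ p| < (n : ℝ) + 1 := by linarith
        rw [div_lt_iff₀ hc] at hn1
        have hpos : (0:ℝ) < (n:ℝ) + 1 := by positivity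
        have hinv : (1 / ((n:ℝ)+1)) * ((n:ℝ)+1) = 1 := by field_simp
        have hinvpos : (0:ℝ) < 1 / ((n:ℝ)+1) := by positivity
        nlinarith [hle n, hn1, hinv, hc, hinvpos]
      have := abs_nonneg (dfun x θ₀ p)
      exact abs_eq_zero.mp (le_antisymm h0 this)
    have h0 : μ (⋂ n : ℕ, t ∩ Wset x θ₀ (1 / (n + 1))) = 0 :=
      measure_mono_null hInter (hline θ₀)
    have := tendsto_measure_iInter_atTop (μ := μ)
      (fun n => ((htm.inter (measurableSet_Wset x θ₀ _)).nullMeasurableSet))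
      hanti ⟨0, hfin _⟩
    rwa [h0] at this
  -- continuity of G
  have hGcont : Continuous G := by
    rw [Metric.continuous_iff]
    intro θ₀ ε hε
    obtain ⟨N, hN⟩ := (ENNReal.tendsto_atTop_zero.mp (hWtend θ₀)) (ENNReal.ofReal ε / 2)
      (ENNReal.div_pos (ENNReal.ofReal_pos.mpr hε).ne' ENNReal.ofNat_ne_top)
    refine ⟨1 / (N + 1), by positivity, fun θ hθ => ?_⟩
    have hsub : Wset x θ₀ |θ - θ₀| ⊆ Wset x θ₀ (1 / (N + 1)) := by
      apply Wset_mono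
      rw [Real.dist_eq] at hθ
      exact le_of_lt hθ
    have hb := hGbound θ₀ θ
    have hmono : μ (t ∩ Wset x θ₀ |θ - θ₀|) ≤ μ (t ∩ Wset x θ₀ (1 / (N + 1))) :=
      measure_mono (Set.inter_subset_inter_right t hsub)
    have hNN := hN N le_rfl
    have hlt : μ (t ∩ Wset x θ₀ |θ - θ₀|) < ENNReal.ofReal ε := by
      calc μ (t ∩ Wset x θ₀ |θ - θ₀|) ≤ ENNReal.ofReal ε / 2 := le_trans hmono hNN
        _ < ENNReal.ofReal ε := by
            apply ENNReal.half_lt_self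
            · exact (ENNReal.ofReal_pos.mpr hε).ne'
            · exact ENNReal.ofReal_ne_top
    have := (ENNReal.lt_ofReal_iff_toReal_lt (hfin _)).mp hlt
    rw [Real.dist_eq]
    exact lt_of_le_of_lt hb this
  -- intermediate value argument
  set g : ℝ → ℝ := fun θ => G θ - G (θ + Real.pi) with hgdef
  have hgcont : Continuous g := hGcont.sub (hGcont.comp (continuous_id.add continuous_const))
  have hGper : G (Real.pi + Real.pi) = G 0 := by
    have : Real.pi + Real.pi = 0 + 2 * Real.pi := by ring
    rw [hGdef]
    simp only [this, Hset_add_two_pi]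
  have hgpi : g Real.pi = - g 0 := by
    simp only [hgdef, zero_add]
    rw [hGper]; ring
  have hzero : ∃ θ : ℝ, g θ = 0 := by
    rcases le_total (g 0) 0 with h | h
    · have h0 : (0:ℝ) ∈ Set.Icc (g 0) (g Real.pi) := by
        rw [hgpi]; constructor <;> linarith
      obtain ⟨θ, _, hθ⟩ := intermediate_value_Icc Real.pi_pos.le hgcont.continuousOn h0
      exact ⟨θ, hθ⟩
    · have h0 : (0:ℝ) ∈ Set.Icc (g Real.pi) (g 0) := by
        rw [hgpi]; constructor <;> linarith
      obtain ⟨θ, _, hθ⟩ := intermediate_value_Icc' Real.pi_pos.le hgcont.continuousOn h0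
      exact ⟨θ, hθ⟩
  obtain ⟨θ, hθ⟩ := hzero
  -- conclude: both halves have measure μ t / 2
  have hGeq : G θ = G (θ + Real.pi) := by
    have := hθ
    simp only [hgdef] at this
    linarith
  have hmeq : μ (t ∩ Hset x θ) = μ (t ∩ Hset x (θ + Real.pi)) :=
    (ENNReal.toReal_eq_toReal_iff' (hfin _) (hfin _)).mp hGeq
  have hhalf : μ (t ∩ Hset x θ) = μ t / 2 := by
    rw [ENNReal.eq_div_iff (two_ne_zero) (ENNReal.ofNat_ne_top)]
    rw [two_mul]
    nth_rewrite 2 [hmeq]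
    exact hsum θ
  have hhalf' : μ (t ∩ Hset x (θ + Real.pi)) = μ t / 2 := by rw [← hmeq]; exact hhalf
  refine ⟨Real.cos θ, Real.sin θ, ?_, ?_, ?_⟩
  · intro h
    rw [Prod.mk.injEq] at h
    have := Real.sin_sq_add_cos_sq θ
    rw [h.1, h.2] at this; norm_num at this
  · have hset1 : {p : ℝ × ℝ | 0 < Real.cos θ * (p.1 - x.1) + Real.sin θ * (p.2 - x.2)}
        = Hset x θ := rfl
    rw [hset1, hhalf]
  · have hset2 : {p : ℝ × ℝ | Real.cos θ * (p.1 - x.1) + Real.sin θ * (p.2 - x.2) < 0}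
        = Hset x (θ + Real.pi) := by
      rw [Hset_add_pi]; rfl
    rw [hset2, hhalf']
end
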